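/- Let L : ℝⁿ → ℝ be positively homogeneous of degree 2 and twice continuously differentiable at 0. Then L(v) = g(v,v) for all v, where g is one half of the Hessian of L at the zero vector; in particular L is a quadratic form. -/

import Mathlib

open Topology Filter

/-- A positively 2-homogeneous function `L : ℝⁿ → ℝ` which is `C²` at `0` satisfies
`L v = g(v,v)` where `g` is half the Hessian of `L` at `0`; in particular `L` is a
quadratic form. -/
theorem stmt_3 {n : ℕ} (L : (Fin n → ℝ) → ℝ)
    (hhom : ∀ v : Fin n → ℝ, ∀ l : ℝ, 0 < l → L (l • v) = l ^ 2 * L v)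
    (hC2 : ContDiffAt ℝ 2 L 0)
    (g : (Fin n → ℝ) → (Fin n → ℝ) → ℝ)
    (hg : ∀ u w : Fin n → ℝ,
      g u w = (1 / 2) * fderiv ℝ (fun x => fderiv ℝ L x u) 0 w) :
    ∀ v : Fin n → ℝ, L v = g v v := by
  intro v
  rw [hg]
  -- L 0 = 0
  have hL0 : L 0 = 0 := by
    have h := hhom 0 2 (by norm_num)
    simp at h
    linarith
  set g1 : (Fin n → ℝ) → ℝ := fun x => fderiv ℝ L x v with hg1def
  set φ : ℝ → ℝ := fun t => L (t • v) with hφdef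
  have hpos : ∀ t : ℝ, 0 < t → φ t = t ^ 2 * L v := fun t ht => hhom v t ht
  -- differentiability of L near 0
  have hevL : ∀ᶠ x in 𝓝 (0 : Fin n → ℝ), DifferentiableAt ℝ L x :=
    (hC2.eventually (by norm_num)).mono fun x hx => hx.differentiableAt (by norm_num)
  -- fderiv L differentiable at 0
  have hF : DifferentiableAt ℝ (fderiv ℝ L) 0 :=
    (hC2.fderiv_right (m := 1) (by norm_num)).differentiableAt (by norm_num)
  have hg1 : DifferentiableAt ℝ g1 0 := hF.clm_apply (differentiableAt_const v)
  -- derivative of t ↦ t • v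
  have hsmul : ∀ t : ℝ, HasDerivAt (fun s : ℝ => s • v) v t := by
    intro t
    simpa using (hasDerivAt_id t).smul_const v
  -- φ' t = g1 (t • v) near 0
  have hevφ : ∀ᶠ t in 𝓝 (0 : ℝ), HasDerivAt φ (g1 (t • v)) t := by
    have hcont : Continuous (fun t : ℝ => t • v) := by continuity
    have : ∀ᶠ t in 𝓝 (0 : ℝ), DifferentiableAt ℝ L (t • v) := by
      have h0 : Filter.Tendsto (fun t : ℝ => t • v) (𝓝 0) (𝓝 0) := by
        simpa using hcont.tendsto 0
      exact h0.eventually hevL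
    filter_upwards [this] with t hL
    exact hL.hasFDerivAt.comp_hasDerivAt t (hsmul t)
  have hderφ : deriv φ =ᶠ[𝓝 (0 : ℝ)] fun t => g1 (t • v) := by
    filter_upwards [hevφ] with t ht using ht.deriv
  -- deriv (deriv φ) at 0 equals fderiv g1 0 v
  have hψ : HasDerivAt (fun t : ℝ => g1 (t • v)) ((fderiv ℝ g1 0) v) 0 := by
    have hg1' : HasFDerivAt g1 (fderiv ℝ g1 0) ((0:ℝ) • v) := by
      simpa using hg1.hasFDerivAt
    exact hg1'.comp_hasDerivAt 0 (hsmul 0)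
  have hD : HasDerivAt (deriv φ) ((fderiv ℝ g1 0) v) 0 :=
    hψ.congr_of_eventuallyEq hderφ
  -- deriv φ t = 2 t * L v for t > 0
  have hDt : ∀ t : ℝ, 0 < t → deriv φ t = 2 * t * L v := by
    intro t ht
    have heq : φ =ᶠ[𝓝 t] fun s => s ^ 2 * L v := by
      filter_upwards [Ioi_mem_nhds ht] with s hs using hpos s hs
    rw [heq.deriv_eq]
    have : HasDerivAt (fun s : ℝ => s ^ 2 * L v) (2 * t * L v) t := by
      simpa [mul_comm] using ((hasDerivAt_pow 2 t).mul_const (L v))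
    exact this.deriv
  -- deriv φ 0 = 0
  have hD0ex : HasDerivAt φ (deriv φ 0) 0 := by
    have := hevφ.self_of_nhds
    simpa [this.deriv] using this
  have hD0 : deriv φ 0 = 0 := by
    have h1 : Filter.Tendsto (slope φ 0) (𝓝[>] (0:ℝ)) (𝓝 (deriv φ 0)) :=
      (hasDerivAt_iff_tendsto_slope.mp hD0ex).mono_left
        (nhdsWithin_mono _ (fun x hx => ne_of_gt hx))
    have h2 : Filter.Tendsto (slope φ 0) (𝓝[>] (0:ℝ)) (𝓝 0) := by
      have hφ0 : φ 0 = 0 := by simp [hφdef, hL0]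
      have heq : slope φ 0 =ᶠ[𝓝[>] (0:ℝ)] fun t => t * L v := by
        filter_upwards [self_mem_nhdsWithin] with t ht
        have ht' : (0:ℝ) < t := ht
        rw [slope_def_field, hpos t ht', hφ0]
        field_simp
        rw [sub_zero, sub_zero, div_eq_iff ht'.ne']; ring
      have hmt : Filter.Tendsto (fun t : ℝ => t * L v) (𝓝[>] (0:ℝ)) (𝓝 0) := by
        have h3 : Filter.Tendsto (fun t : ℝ => t * L v) (𝓝 (0:ℝ)) (𝓝 (0 * L v)) :=
          (continuous_mul_right (L v)).tendsto 0
        simpa using h3.mono_left nhdsWithin_le_nhds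
      exact Filter.Tendsto.congr' heq.symm hmt
    exact tendsto_nhds_unique h1 h2
  -- second derivative via slope
  have hfin : (fderiv ℝ g1 0) v = 2 * L v := by
    have h1 : Filter.Tendsto (slope (deriv φ) 0) (𝓝[>] (0:ℝ)) (𝓝 ((fderiv ℝ g1 0) v)) :=
      (hasDerivAt_iff_tendsto_slope.mp hD).mono_left
        (nhdsWithin_mono _ (fun x hx => ne_of_gt hx))
    have h2 : Filter.Tendsto (slope (deriv φ) 0) (𝓝[>] (0:ℝ)) (𝓝 (2 * L v)) := by
      have heq : slope (deriv φ) 0 =ᶠ[𝓝[>] (0:ℝ)] fun _ => 2 * L v := by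
        filter_upwards [self_mem_nhdsWithin] with t ht
        have ht' : (0:ℝ) < t := ht
        rw [slope_def_field, hDt t ht', hD0]
        field_simp
        rw [sub_zero, sub_zero, div_eq_iff ht'.ne']; ring
      exact Filter.Tendsto.congr' heq.symm tendsto_const_nhds
    exact tendsto_nhds_unique h1 h2
  rw [hfin]
  ring
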